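/- Let K be the annulus {x ∈ ℝ^d : 1/2 ≤ ‖x‖₂ ≤ 1}, let x* be a unit vector, and for δ ∈ (0, 1] define φ_δ(x) := (1/3)(⟨x, x*⟩ x − ‖x‖₂² x*) + (δ/3)(‖x‖₂² − 5/8) x. Then ‖φ_δ(x)‖₂ ≤ 1 for all x ∈ K, and there exists ε₀ > 0 (one may take any ε₀ < δ/16) such that for all x ∈ K and all ε ∈ (0, ε₀], x − ε φ_δ(x) ∈ K. -/
import Mathlib


open scoped RealInnerProductSpace

/-- The vector field `φ_δ` used in the zero-one loss analysis. -/
noncomputable def phiField {d : ℕ} (xs : EuclideanSpace ℝ (Fin d)) (δ : ℝ)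
    (x : EuclideanSpace ℝ (Fin d)) : EuclideanSpace ℝ (Fin d) :=
  (1 / 3 : ℝ) • (⟪x, xs⟫ • x - ‖x‖ ^ 2 • xs) +
    (δ / 3) • ((‖x‖ ^ 2 - 5 / 8) • x)

lemma phi_norm_le {d : ℕ} (xs : EuclideanSpace ℝ (Fin d)) (hxs : ‖xs‖ = 1)
    (δ : ℝ) (hδ0 : 0 < δ) (hδ1 : δ ≤ 1)
    (x : EuclideanSpace ℝ (Fin d)) (h1 : 1/2 ≤ ‖x‖) (h2 : ‖x‖ ≤ 1) :
    ‖phiField xs δ x‖ ≤ 1 := by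
  have ha : |⟪x, xs⟫| ≤ ‖x‖ := by
    calc |⟪x, xs⟫| ≤ ‖x‖ * ‖xs‖ := abs_real_inner_le_norm x xs
    _ = ‖x‖ := by rw [hxs, mul_one]
  have hfirst : ‖⟪x, xs⟫ • x - ‖x‖^2 • xs‖ ≤ 2 := by
    calc ‖⟪x, xs⟫ • x - ‖x‖^2 • xs‖ ≤ ‖⟪x, xs⟫ • x‖ + ‖(‖x‖^2) • xs‖ :=
          norm_sub_le _ _
    _ = |⟪x, xs⟫| * ‖x‖ + |‖x‖^2| * ‖xs‖ := by
          rw [norm_smul, norm_smul, Real.norm_eq_abs, Real.norm_eq_abs]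
    _ ≤ 2 := by
          rw [hxs, mul_one, abs_of_nonneg (by positivity : (0:ℝ) ≤ ‖x‖^2)]
          nlinarith [abs_nonneg ⟪x, xs⟫]
  have habs : |‖x‖^2 - 5/8| ≤ 3/8 := by
    rw [abs_le]; constructor <;> nlinarith
  calc ‖phiField xs δ x‖
      ≤ ‖(1/3 : ℝ) • (⟪x, xs⟫ • x - ‖x‖^2 • xs)‖ + ‖(δ/3) • ((‖x‖^2 - 5/8) • x)‖ :=
        norm_add_le _ _
    _ = (1/3) * ‖⟪x, xs⟫ • x - ‖x‖^2 • xs‖ + (δ/3) * (|‖x‖^2 - 5/8| * ‖x‖) := by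
        rw [norm_smul, norm_smul, norm_smul, Real.norm_eq_abs, Real.norm_eq_abs,
          Real.norm_eq_abs, abs_of_nonneg (by norm_num : (0:ℝ) ≤ 1/3),
          abs_of_nonneg (by positivity : (0:ℝ) ≤ δ/3)]
    _ ≤ 1 := by
        nlinarith [abs_nonneg (‖x‖^2 - 5/8), norm_nonneg x,
          mul_nonneg (abs_nonneg (‖x‖^2 - 5/8)) (norm_nonneg x)]

lemma phi_inner {d : ℕ} (xs : EuclideanSpace ℝ (Fin d)) (δ : ℝ)
    (x : EuclideanSpace ℝ (Fin d)) :
    ⟪x, phiField xs δ x⟫ = (δ/3) * (‖x‖^2 - 5/8) * ‖x‖^2 := by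
  simp only [phiField, inner_add_right, inner_smul_right, inner_sub_right,
    real_inner_self_eq_norm_sq]
  ring

lemma annulus_key (δ ε t P : ℝ) (hδ0 : 0 < δ) (hδ1 : δ ≤ 1)
    (hε0 : 0 < ε) (hε1 : ε ≤ δ/32) (ht1 : 1/4 ≤ t) (ht2 : t ≤ 1)
    (hP0 : 0 ≤ P) (hP1 : P ≤ 1) :
    1/4 ≤ t - 2*ε*(δ/3*(t-5/8)*t) + ε^2*P^2 ∧
    t - 2*ε*(δ/3*(t-5/8)*t) + ε^2*P^2 ≤ 1 := by
  have hε32 : ε ≤ 1/32 := by nlinarith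
  have hεδ : ε*δ ≤ 1/32 := by nlinarith
  have ht0 : (0:ℝ) ≤ t := by linarith
  have hc : 0 ≤ 1 - 2*ε*(δ/3)*t := by
    nlinarith [mul_nonneg (mul_nonneg hε0.le hδ0.le) ht0,
      mul_le_mul_of_nonneg_left ht2 (by positivity : (0:ℝ) ≤ 2*ε*(δ/3))]
  have hεP : ε^2*P^2 ≤ ε^2 := mul_le_of_le_one_right (sq_nonneg ε) (by nlinarith)
  have hεP0 : 0 ≤ ε^2*P^2 := by positivity
  constructor
  · nlinarith [mul_nonneg (show (0:ℝ) ≤ t - 1/4 by linarith) hc,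
      mul_nonneg (mul_nonneg hε0.le hδ0.le) ht0]
  · have hfac : 0 ≤ 1 - 2*ε*(δ/3)*(1 + t) + 2*ε*(δ/3)*(5/8) := by
      nlinarith [mul_nonneg (mul_nonneg hε0.le hδ0.le) ht0]
    nlinarith [mul_nonneg (show (0:ℝ) ≤ 1 - t by linarith) hfac,
      mul_nonneg hε0.le hδ0.le]

theorem phiField_valid
    {d : ℕ} (xs : EuclideanSpace ℝ (Fin d)) (hxs : ‖xs‖ = 1)
    (δ : ℝ) (hδ0 : 0 < δ) (hδ1 : δ ≤ 1) :
    (∀ x : EuclideanSpace ℝ (Fin d),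
      1 / 2 ≤ ‖x‖ → ‖x‖ ≤ 1 → ‖phiField xs δ x‖ ≤ 1) ∧
    ∃ ε₀ > (0 : ℝ), ∀ x : EuclideanSpace ℝ (Fin d),
      1 / 2 ≤ ‖x‖ → ‖x‖ ≤ 1 → ∀ ε : ℝ, 0 < ε → ε ≤ ε₀ →
        1 / 2 ≤ ‖x - ε • phiField xs δ x‖ ∧ ‖x - ε • phiField xs δ x‖ ≤ 1 := by
  refine ⟨fun x h1 h2 => phi_norm_le xs hxs δ hδ0 hδ1 x h1 h2, δ/32, by positivity,
    fun x h1 h2 ε hε0 hε1 => ?_⟩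
  have hφ : ‖phiField xs δ x‖ ≤ 1 := phi_norm_le xs hxs δ hδ0 hδ1 x h1 h2
  have hφ0 : (0:ℝ) ≤ ‖phiField xs δ x‖ := norm_nonneg _
  have ht1 : (1:ℝ)/4 ≤ ‖x‖^2 := by nlinarith
  have ht2 : ‖x‖^2 ≤ 1 := by nlinarith [norm_nonneg x]
  have hs : ‖x - ε • phiField xs δ x‖^2
      = ‖x‖^2 - 2*ε*(δ/3*(‖x‖^2-5/8)*‖x‖^2) + ε^2*‖phiField xs δ x‖^2 := by
    rw [norm_sub_sq_real, inner_smul_right, phi_inner, norm_smul,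
      Real.norm_eq_abs, abs_of_pos hε0, mul_pow]
    ring
  obtain ⟨hlow, hup⟩ := annulus_key δ ε (‖x‖^2) (‖phiField xs δ x‖) hδ0 hδ1 hε0 hε1
    ht1 ht2 hφ0 hφ
  rw [← hs] at hlow hup
  constructor
  · nlinarith [norm_nonneg (x - ε • phiField xs δ x)]
  · nlinarith [norm_nonneg (x - ε • phiField xs δ x)]
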